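/- There is no nilpotent Jordan superalgebra J over ℂ of type (2,3) admitting a homogeneous basis {e₁, e₂; f₁, f₂, f₃} (e_i even, f_j odd) such that e₁² = e₂, e₁e₂ = e₂² = 0, e₂f₁ = 0, e₂f₂ = f₁, and e₂f₃ = f₂. In other words, if J₀ is the 2-dimensional Jordan algebra with e₁² = e₂ and all other products zero and dim J₁ = 3, then the left multiplication by e₂ on J₁ cannot be a single nilpotent Jordan block of size 3. -/
import Mathlib


noncomputable section

/-- The underlying ℤ/2-graded vector space of type `(m,n)`: even part `Fin m → ℂ`,
odd part `Fin n → ℂ`. -/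
abbrev GV (m n : ℕ) : Type := (Fin m → ℂ) × (Fin n → ℂ)

/-- A superalgebra structure tensor of type `(m,n)`: structure constants
`c i j k` (even·even), `ρ i j k` (even·odd) and `Γ i j k` (odd·odd). -/
abbrev Tensor (m n : ℕ) : Type :=
  (Fin m → Fin m → Fin m → ℂ) × (Fin m → Fin n → Fin n → ℂ) × (Fin n → Fin n → Fin m → ℂ)

/-- The ℤ/2-graded multiplication on `GV m n` determined by a structure tensor. -/
def mulOf {m n : ℕ} (μ : Tensor m n) (x y : GV m n) : GV m n :=
  (fun k => (∑ i, ∑ j, x.1 i * y.1 j * μ.1 i j k) + ∑ i, ∑ j, x.2 i * y.2 j * μ.2.2 i j k,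
   fun k => (∑ i, ∑ j, x.1 i * y.2 j * μ.2.1 i j k) + ∑ i, ∑ j, y.1 i * x.2 j * μ.2.1 i j k)

/-- `x` is homogeneous of parity `p` (`p = 0`: even, `p = 1`: odd). -/
def IsHom {m n : ℕ} (p : ℕ) (x : GV m n) : Prop :=
  (p = 0 ∧ x.2 = 0) ∨ (p = 1 ∧ x.1 = 0)

/-- The sign `(-1)^k`. -/
def sgn (k : ℕ) : ℂ := (-1 : ℂ) ^ k

/-- The super-Jordan expression `J^s(w; x, y, z)` for homogeneous elements of
parities `pw, px, py, pz`. -/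
def superJ {m n : ℕ} (μ : Tensor m n) (pw px py pz : ℕ) (w x y z : GV m n) : GV m n :=
  mulOf μ (mulOf μ w x) (mulOf μ y z)
    + sgn (px * py) • mulOf μ (mulOf μ w y) (mulOf μ x z)
    + sgn ((px + py) * pz) • mulOf μ (mulOf μ w z) (mulOf μ x y)
    - sgn (pw * px) • mulOf μ x (mulOf μ w (mulOf μ y z))
    - sgn (py * (pw + px)) • mulOf μ y (mulOf μ w (mulOf μ x z))
    - sgn (pz * (pw + px + py)) • mulOf μ z (mulOf μ w (mulOf μ x y))

/-- `μ` is a Jordan superalgebra structure: supercommutativity and the Jordan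
superidentity hold for all homogeneous elements. -/
def IsJordanSuper {m n : ℕ} (μ : Tensor m n) : Prop :=
  (∀ (px py : ℕ) (x y : GV m n), IsHom px x → IsHom py y →
      mulOf μ x y = sgn (px * py) • mulOf μ y x) ∧
  (∀ (pw px py pz : ℕ) (w x y z : GV m n),
      IsHom pw w → IsHom px x → IsHom py y → IsHom pz z →
      superJ μ pw px py pz w x y z = 0)

/-- The product of two graded subspaces: the span of all products. -/
def mulSub {m n : ℕ} (μ : Tensor m n) (A B : Submodule ℂ (GV m n)) : Submodule ℂ (GV m n) :=
  Submodule.span ℂ {z | ∃ a ∈ A, ∃ b ∈ B, z = mulOf μ a b}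

/-- The powers `J^k`: `J^1 = J` and `J^{k+1} = Σ_{i=1}^{k} J^i · J^{k+1-i}`. -/
def powT {m n : ℕ} (μ : Tensor m n) : ℕ → Submodule ℂ (GV m n)
  | 0 => ⊤
  | 1 => ⊤
  | (k + 2) => ⨆ i : Fin (k + 1), mulSub μ (powT μ ((i : ℕ) + 1)) (powT μ (k + 1 - (i : ℕ)))
  decreasing_by
  · have := i.isLt; omega
  · omega

/-- `μ` is nilpotent: some power vanishes. -/
def IsNilpotentT {m n : ℕ} (μ : Tensor m n) : Prop :=
  ∃ k : ℕ, 1 ≤ k ∧ powT μ k = ⊥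

/-- A grading-preserving algebra isomorphism between the superalgebras determined
by `μ` and `μ'`. -/
def Iso {m n : ℕ} (μ μ' : Tensor m n) : Prop :=
  ∃ (T : (Fin m → ℂ) ≃ₗ[ℂ] (Fin m → ℂ)) (S : (Fin n → ℂ) ≃ₗ[ℂ] (Fin n → ℂ)),
    ∀ x y : GV m n,
      (T ((mulOf μ x y).1), S ((mulOf μ x y).2)) = mulOf μ' (T x.1, S x.2) (T y.1, S y.2)

/-- `μ` degenerates to `μ'`: `μ'` lies in the closure of the orbit of `μ` under
base change (in the standard topology). -/
def degenerates {m n : ℕ} (μ μ' : Tensor m n) : Prop :=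
  μ' ∈ closure {ν : Tensor m n | Iso μ ν}

/-- Standard even basis vector `e_i`. -/
def eps {m n : ℕ} (i : Fin m) : GV m n := (Pi.single i 1, 0)

/-- Standard odd basis vector `f_j`. -/
def ph {m n : ℕ} (j : Fin n) : GV m n := (0, Pi.single j 1)


/-- there is no nilpotent Jordan superalgebra of type (2,3) with
`e₁² = e₂`, `e₁e₂ = e₂² = 0` in which left multiplication by `e₂` acts on the odd
part as a single nilpotent Jordan block of size 3. -/
theorem stmt9 :
    ¬ ∃ μ : Tensor 2 3, IsJordanSuper μ ∧ IsNilpotentT μ ∧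
        mulOf μ (eps 0) (eps 0) = eps 1 ∧
        mulOf μ (eps 0) (eps 1) = 0 ∧
        mulOf μ (eps 1) (eps 1) = 0 ∧
        mulOf μ (eps 1) (ph 0) = 0 ∧
        mulOf μ (eps 1) (ph 1) = ph 0 ∧
        mulOf μ (eps 1) (ph 2) = ph 1 := by
  rintro ⟨μ, ⟨-, hJ⟩, -, h2, h3, h4, h5, h6, h7⟩
  have c000 : μ.1 0 0 0 = 0 := by
    simpa [mulOf, eps, Fin.sum_univ_succ, Pi.single_apply] using congrFun (congrArg Prod.fst h2) 0
  have c001 : μ.1 0 0 1 = 1 := by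
    simpa [mulOf, eps, Fin.sum_univ_succ, Pi.single_apply] using congrFun (congrArg Prod.fst h2) 1
  have c01 : ∀ k, μ.1 0 1 k = 0 := fun k => by
    simpa [mulOf, eps, Fin.sum_univ_succ, Pi.single_apply] using congrFun (congrArg Prod.fst h3) k
  have c11 : ∀ k, μ.1 1 1 k = 0 := fun k => by
    simpa [mulOf, eps, Fin.sum_univ_succ, Pi.single_apply] using congrFun (congrArg Prod.fst h4) k
  have r0 : ∀ k, μ.2.1 1 0 k = 0 := fun k => by
    simpa [mulOf, eps, ph, Fin.sum_univ_succ, Pi.single_apply] using congrFun (congrArg Prod.snd h5) k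
  have r1 : ∀ k, μ.2.1 1 1 k = (if k = 0 then 1 else (0:ℂ)) := fun k => by
    simpa [mulOf, eps, ph, Fin.sum_univ_succ, Pi.single_apply] using congrFun (congrArg Prod.snd h6) k
  have r2 : ∀ k, μ.2.1 1 2 k = (if k = 1 then 1 else (0:ℂ)) := fun k => by
    simpa [mulOf, eps, ph, Fin.sum_univ_succ, Pi.single_apply] using congrFun (congrArg Prod.snd h7) k
  have hE : ∀ i : Fin 2, IsHom 0 (eps i : GV 2 3) := fun i => Or.inl ⟨rfl, rfl⟩
  have hF : ∀ j : Fin 3, IsHom 1 (ph j : GV 2 3) := fun j => Or.inr ⟨rfl, rfl⟩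
  have J1 : ∀ j, superJ μ 1 0 0 0 (ph j) (eps 0) (eps 0) (eps 0) = 0 :=
    fun j => hJ 1 0 0 0 (ph j) (eps 0) (eps 0) (eps 0) (hF j) (hE 0) (hE 0) (hE 0)
  have J2 : ∀ j, superJ μ 0 0 0 1 (eps 0) (eps 0) (eps 0) (ph j) = 0 :=
    fun j => hJ 0 0 0 1 (eps 0) (eps 0) (eps 0) (ph j) (hE 0) (hE 0) (hE 0) (hF j)
  have J3 : superJ μ 0 0 0 1 (eps 0) (eps 0) (eps 1) (ph 2) = 0 :=
    hJ 0 0 0 1 (eps 0) (eps 0) (eps 1) (ph 2) (hE 0) (hE 0) (hE 1) (hF 2)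
  have E1 := congrFun (congrArg Prod.snd (J1 0)) 0
  have E2 := congrFun (congrArg Prod.snd (J1 0)) 1
  have E3 := congrFun (congrArg Prod.snd (J1 1)) 0
  have E6 := congrFun (congrArg Prod.snd (J1 2)) 1
  have E7 := congrFun (congrArg Prod.snd (J1 2)) 2
  have F1 := congrFun (congrArg Prod.snd (J2 0)) 0
  have G1 := congrFun (congrArg Prod.snd J3) 0
  simp [superJ, mulOf, eps, ph, sgn, Fin.sum_univ_succ, Pi.single_apply, c000, c001, c01, c11,
    r0, r1, r2] at E1 E2 E3 E6 E7 F1 G1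
  -- write b k j := μ.2.1 0 j k for the matrix of left multiplication by e₁ on the odd part
  have b10 : μ.2.1 0 0 1 = 0 := by linear_combination E1 / 3
  have b20 : μ.2.1 0 0 2 = 0 := by linear_combination E2 / 3
  simp only [b10, b20, mul_zero, zero_mul, add_zero, zero_add, sub_zero, zero_sub] at F1
  have b00 : μ.2.1 0 0 0 = 0 := by
    have h3 : μ.2.1 0 0 0 ^ 3 = 0 := by linear_combination - F1 / 2
    exact pow_eq_zero_iff (three_ne_zero) |>.mp h3
  have b11 : μ.2.1 0 1 1 = 0 := by linear_combination E3 / 3 + b00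
  have b22 : μ.2.1 0 2 2 = 0 := by linear_combination E6 / 3 + b11
  have b21 : μ.2.1 0 1 2 = 0 := by linear_combination - E7 / 3
  simp [b00, b10, b21, b11, b22] at G1

end
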